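/- Every essentially small triangulated category T admits a final support datum: namely (Sp(T), sup), where Sp(T) is the set of thick subcategories of T topologized with {sup(a)}_{a∈T} as a basis of closed subsets and sup(a) = {J : a ∉ J}; for every support datum (X, σ) there exists a unique morphism of support data (X, σ) → (Sp(T), sup). -/

import Mathlib

open CategoryTheory CategoryTheory.Limits CategoryTheory.Pretriangulated ZeroObject

universe v u

variable (C : Type u) [Category.{v} C] [HasZeroObject C] [HasShift C ℤ]
  [Preadditive C] [∀ n : ℤ, (shiftFunctor C n).Additive] [Pretriangulated C]
  [HasBinaryBiproducts C] [EssentiallySmall.{v} C]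

/-- A thick subcategory: a (strictly full) triangulated subcategory closed under
direct summands. -/
structure ThickSubcategory : Type _ where
  P : Set C
  zero : (0 : C) ∈ P
  iso_closed : ∀ {X Y : C}, (X ≅ Y) → X ∈ P → Y ∈ P
  shift_mem : ∀ (X : C) (n : ℤ), X ∈ P → (X⟦n⟧) ∈ P
  ext₂ : ∀ (T : Triangle C) (_ : T ∈ distTriang C), T.obj₁ ∈ P → T.obj₃ ∈ P → T.obj₂ ∈ P
  summand : ∀ (X Y : C), (X ⊞ Y) ∈ P → X ∈ P

/-- A support datum `(X, σ)` on `C`: closed subsets satisfying (SD1)–(SD4). -/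
structure SupportDatum (X : Type*) [TopologicalSpace X] : Type _ where
  σ : C → Set X
  isClosed : ∀ a : C, IsClosed (σ a)
  zero : σ 0 = ∅
  sum : ∀ a b : C, σ (a ⊞ b) = σ a ∪ σ b
  shift : ∀ a : C, σ (a⟦(1 : ℤ)⟧) = σ a
  triangle : ∀ (T : Triangle C) (_ : T ∈ distTriang C), σ T.obj₁ ⊆ σ T.obj₂ ∪ σ T.obj₃

variable {C}

/-- `sup a = {J : a ∉ J}`. -/
def sup (a : C) : Set (ThickSubcategory C) := {J | a ∉ J.P}

/-- The topology on `Sp(T)` with the `sup a` as a basis of closed subsets. -/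
def spTopology : TopologicalSpace (ThickSubcategory C) :=
  TopologicalSpace.generateFrom {U | ∃ a : C, U = (sup a)ᶜ}

lemma ThickSubcategory.ext' {J K : ThickSubcategory C} (h : J.P = K.P) : J = K := by
  cases J; cases K; cases h; rfl

lemma SupportDatum.iso_eq {X : Type*} [TopologicalSpace X] (S : SupportDatum C X)
    {a b : C} (e : a ≅ b) : S.σ a = S.σ b := by
  have key : ∀ {a b : C}, (a ≅ b) → S.σ a ⊆ S.σ b := by
    intro a b e
    have hT : Triangle.mk (Z := (0 : C)) e.hom 0 0 ∈
        distTriang C := by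
      refine isomorphic_distinguished _ (contractible_distinguished a) _ ?_
      exact Triangle.isoMk _ _ (Iso.refl a) e.symm (Iso.refl 0)
        (e.hom_inv_id.trans (Category.comp_id _).symm) (zero_comp.trans comp_zero.symm)
        (zero_comp.trans (Category.id_comp (0 : (0 : C) ⟶ a⟦(1 : ℤ)⟧)).symm)
    have := S.triangle _ hT
    simpa [S.zero] using this
  exact le_antisymm (key e) (key e.symm)

lemma SupportDatum.shift_eq {X : Type*} [TopologicalSpace X] (S : SupportDatum C X)
    (a : C) (n : ℤ) : S.σ (a⟦n⟧) = S.σ a := by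
  have key : ∀ m : ℤ, S.σ (a⟦m + 1⟧) = S.σ (a⟦m⟧) := by
    intro m
    rw [S.iso_eq ((shiftFunctorAdd C m 1).app a)]; exact S.shift _
  have base : S.σ (a⟦(0 : ℤ)⟧) = S.σ a := S.iso_eq ((shiftFunctorZero C ℤ).app a)
  induction n using Int.induction_on with
  | zero => exact base
  | succ k ih => rw [key k, ih]
  | pred k ih => rw [← ih, ← key (-k - 1)]; norm_num

theorem final_supportDatum {X : Type*} [TopologicalSpace X] (S : SupportDatum C X) :
    ∃! f : X → ThickSubcategory C,
      @Continuous X (ThickSubcategory C) _ spTopology f ∧ ∀ a : C, S.σ a = f ⁻¹' (sup a) := by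
  classical
  refine ⟨fun x =>
    { P := {a : C | x ∉ S.σ a}
      zero := by simp [S.zero]
      iso_closed := fun e h => by rwa [Set.mem_setOf_eq, ← S.iso_eq e]
      shift_mem := fun a n h => by rwa [Set.mem_setOf_eq, S.shift_eq]
      ext₂ := fun T hT h1 h3 => by
        have := S.triangle _ (rot_of_distTriang T hT)
        simp only [Triangle.rotate] at this
        intro hx
        rcases this hx with hx | hx
        · exact h3 hx
        · have hx' : x ∈ S.σ (T.obj₁⟦(1 : ℤ)⟧) := hx
          exact h1 (by rwa [S.shift_eq] at hx')
      summand := fun a b h => by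
        intro hx
        exact h (by rw [S.sum]; exact Or.inl hx) }, ⟨?_, ?_⟩, ?_⟩
  · rw [spTopology, continuous_generateFrom_iff]
    rintro U ⟨a, rfl⟩
    convert (S.isClosed a).isOpen_compl using 1
    ext x
    simp [sup]
  · intro a
    ext x
    simp [sup]
  · intro g ⟨_, hg⟩
    funext x
    apply ThickSubcategory.ext'
    ext a
    have := hg a
    simp only [Set.ext_iff, Set.mem_preimage, sup, Set.mem_setOf_eq] at this
    have h := this x
    constructor
    · intro ha hs
      exact (h.mp hs) ha
    · intro hb
      by_contra hc
      exact hb (h.mpr hc)
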